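/- There exists a constant c > 0 such that for every T ∈ (0, 1/2] and every pair of C¹ functions y_1, y_2 : [−T, T] → (0, 1/2) with y_1 ≤ y_2, y_1(±T) = y_2(±T), one has (1/2)∫_{−T}^{T} (y_2² − y_1²) ≤ c ( ∫_{−T}^{T} y_1^{3/2}√(1 + y_1'²) + ∫_{−T}^{T} y_2^{3/2}√(1 + y_2'²) )^{6/5}, provided y_1 is even and non-decreasing on [0,T] and y_2 is even and non-increasing on [0,T]. -/

import Mathlib

open Real Set intervalIntegral
open MeasureTheory


private lemma rpow_add_le {x y p : ℝ} (hx : 0 ≤ x) (hy : 0 ≤ y) (hp : 1 ≤ p) :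
    x ^ p + y ^ p ≤ (x + y) ^ p := by
  have h := NNReal.coe_le_coe.2 (NNReal.add_rpow_le_rpow_add x.toNNReal y.toNNReal hp)
  rwa [NNReal.coe_add, NNReal.coe_rpow, NNReal.coe_rpow, NNReal.coe_rpow, NNReal.coe_add,
    Real.coe_toNNReal x hx, Real.coe_toNNReal y hy] at h

private lemma key_facts {T : ℝ} (hT0 : 0 < T) {y : ℝ → ℝ}
    (hy : ContDiffOn ℝ 1 y (Icc (-T) T))
    (hpos : ∀ x ∈ Icc (-T) T, 0 < y x ∧ y x < 1 / 2) :
    IntervalIntegrable (fun x => (y x) ^ ((3:ℝ)/2) * Real.sqrt (1 + (deriv y x) ^ 2))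
      volume (-T) T ∧
    2 / 5 * |(y T) ^ ((5:ℝ)/2) - (y 0) ^ ((5:ℝ)/2)| ≤
      ∫ x in (-T)..T, (y x) ^ ((3:ℝ)/2) * Real.sqrt (1 + (deriv y x) ^ 2) := by
  have hTT : -T ≤ T := by linarith
  have hTT' : -T < T := by linarith
  have hderivcont : ContinuousOn (derivWithin y (Icc (-T) T)) (Icc (-T) T) :=
    hy.continuousOn_derivWithin (uniqueDiffOn_Icc hTT') le_rfl
  obtain ⟨M, hM⟩ := isCompact_Icc.exists_bound_of_continuousOn hderivcont
  have hM0 : 0 ≤ M := le_trans (norm_nonneg _) (hM (-T) ⟨le_rfl, hTT⟩)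
  have hMb : ∀ x ∈ Ioo (-T) T, |deriv y x| ≤ M := by
    intro x hx
    have hmem : Icc (-T) T ∈ nhds x := Icc_mem_nhds hx.1 hx.2
    rw [← derivWithin_of_mem_nhds hmem]
    exact hM x (Ioo_subset_Icc_self hx)
  have hdiff : ∀ x ∈ Ioo (-T) T, DifferentiableAt ℝ y x := fun x hx =>
    (hy.differentiableOn one_ne_zero).differentiableAt (Icc_mem_nhds hx.1 hx.2)
  have hcont32 : ContinuousOn (fun x => (y x) ^ ((3:ℝ)/2)) (Icc (-T) T) :=
    hy.continuousOn.rpow_const (fun x hx => Or.inr (by norm_num))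
  have hmeas_sqrt : Measurable fun x => Real.sqrt (1 + (deriv y x) ^ 2) :=
    (Real.continuous_sqrt.measurable).comp (measurable_const.add ((measurable_deriv y).pow_const 2))
  -- integrability of the main integrand
  have hgInt : IntervalIntegrable (fun x => (y x) ^ ((3:ℝ)/2) * Real.sqrt (1 + (deriv y x) ^ 2))
      volume (-T) T := by
    rw [intervalIntegrable_iff_integrableOn_Ioc_of_le hTT, integrableOn_Ioc_iff_integrableOn_Ioo]
    apply Integrable.mono' (integrable_const (Real.sqrt (1 + M ^ 2)))
    · exact (((hcont32.mono Ioo_subset_Icc_self).aestronglyMeasurable measurableSet_Ioo).mul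
        hmeas_sqrt.aestronglyMeasurable)
    · filter_upwards [ae_restrict_mem measurableSet_Ioo] with x hx
      have hyx := hpos x (Ioo_subset_Icc_self hx)
      have h1 : (y x) ^ ((3:ℝ)/2) ≤ 1 := Real.rpow_le_one hyx.1.le (by linarith) (by norm_num)
      have h2 : Real.sqrt (1 + (deriv y x) ^ 2) ≤ Real.sqrt (1 + M ^ 2) := by
        apply Real.sqrt_le_sqrt
        have := hMb x hx
        nlinarith [abs_nonneg (deriv y x), sq_abs (deriv y x)]
      rw [Real.norm_eq_abs,
        abs_of_nonneg (mul_nonneg (Real.rpow_nonneg hyx.1.le _) (Real.sqrt_nonneg _))]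
      calc (y x) ^ ((3:ℝ)/2) * Real.sqrt (1 + (deriv y x) ^ 2)
          ≤ 1 * Real.sqrt (1 + M ^ 2) :=
            mul_le_mul h1 h2 (Real.sqrt_nonneg _) one_pos.le
        _ = Real.sqrt (1 + M ^ 2) := one_mul _
  -- integrability of the derivative integrand on [0, T]
  have hsub0 : Ioo (0:ℝ) T ⊆ Ioo (-T) T := Ioo_subset_Ioo (by linarith) le_rfl
  have hInt : IntervalIntegrable (fun x => (y x) ^ ((3:ℝ)/2) * deriv y x) volume 0 T := by
    rw [intervalIntegrable_iff_integrableOn_Ioc_of_le hT0.le,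
      integrableOn_Ioc_iff_integrableOn_Ioo]
    apply Integrable.mono' (integrable_const M)
    · exact (((hcont32.mono (hsub0.trans Ioo_subset_Icc_self)).aestronglyMeasurable
        measurableSet_Ioo).mul (measurable_deriv y).aestronglyMeasurable)
    · filter_upwards [ae_restrict_mem measurableSet_Ioo] with x hx
      have hx' : x ∈ Ioo (-T) T := hsub0 hx
      have hyx := hpos x (Ioo_subset_Icc_self hx')
      have h1 : (y x) ^ ((3:ℝ)/2) ≤ 1 := Real.rpow_le_one hyx.1.le (by linarith) (by norm_num)
      rw [Real.norm_eq_abs, abs_mul, abs_of_nonneg (Real.rpow_nonneg hyx.1.le _)]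
      calc (y x) ^ ((3:ℝ)/2) * |deriv y x| ≤ 1 * M :=
            mul_le_mul h1 (hMb x hx') (abs_nonneg _) one_pos.le
        _ = M := one_mul M
  refine ⟨hgInt, ?_⟩
  -- FTC
  have hsubIcc : Icc (0:ℝ) T ⊆ Icc (-T) T := Icc_subset_Icc (by linarith) le_rfl
  have hftc : ∫ x in (0:ℝ)..T, (y x) ^ ((3:ℝ)/2) * deriv y x
      = 2/5 * (y T) ^ ((5:ℝ)/2) - 2/5 * (y 0) ^ ((5:ℝ)/2) := by
    have := integral_eq_sub_of_hasDeriv_right_of_le hT0.le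
      (f := fun t => 2/5 * (y t) ^ ((5:ℝ)/2))
      (f' := fun x => (y x) ^ ((3:ℝ)/2) * deriv y x)
      (continuousOn_const.mul ((hy.continuousOn.mono hsubIcc).rpow_const
        (fun x hx => Or.inr (by norm_num))))
      (fun x hx => by
        have hx' : x ∈ Ioo (-T) T := hsub0 hx
        have hyx := (hpos x (Ioo_subset_Icc_self hx')).1
        have hda := (hdiff x hx').hasDerivAt
        have h5 := (hda.rpow_const (p := (5:ℝ)/2) (Or.inl hyx.ne')).const_mul (2/5 : ℝ)
        have : (2/5 : ℝ) * (deriv y x * ((5:ℝ)/2) * y x ^ ((5:ℝ)/2 - 1))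
            = (y x) ^ ((3:ℝ)/2) * deriv y x := by
          rw [show (5:ℝ)/2 - 1 = 3/2 by norm_num]; ring
        rw [this] at h5
        exact h5.hasDerivWithinAt)
      hInt
    linarith [this]
  -- comparison
  have habs : |∫ x in (0:ℝ)..T, (y x) ^ ((3:ℝ)/2) * deriv y x|
      ≤ ∫ x in (0:ℝ)..T, (y x) ^ ((3:ℝ)/2) * Real.sqrt (1 + (deriv y x) ^ 2) := by
    refine le_trans (intervalIntegral.abs_integral_le_integral_abs hT0.le) ?_
    apply integral_mono_on hT0.le hInt.abs (hgInt.mono_set ?_)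
    · intro x hx
      have hyx := (hpos x (hsubIcc hx)).1
      rw [abs_mul, abs_of_nonneg (Real.rpow_nonneg hyx.le _)]
      apply mul_le_mul_of_nonneg_left _ (Real.rpow_nonneg hyx.le _)
      rw [← Real.sqrt_sq_eq_abs]
      exact Real.sqrt_le_sqrt (by nlinarith)
    · rw [uIcc_of_le hT0.le, uIcc_of_le hTT]
      exact hsubIcc
  have hsplit : (∫ x in (0:ℝ)..T, (y x) ^ ((3:ℝ)/2) * Real.sqrt (1 + (deriv y x) ^ 2))
      ≤ ∫ x in (-T)..T, (y x) ^ ((3:ℝ)/2) * Real.sqrt (1 + (deriv y x) ^ 2) := by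
    have hi1 : IntervalIntegrable (fun x => (y x) ^ ((3:ℝ)/2) * Real.sqrt (1 + (deriv y x) ^ 2))
        volume (-T) 0 := hgInt.mono_set (by
          rw [uIcc_of_le (by linarith : -T ≤ (0:ℝ)), uIcc_of_le hTT]
          exact Icc_subset_Icc le_rfl hT0.le)
    have hi2 : IntervalIntegrable (fun x => (y x) ^ ((3:ℝ)/2) * Real.sqrt (1 + (deriv y x) ^ 2))
        volume 0 T := hgInt.mono_set (by
          rw [uIcc_of_le hT0.le, uIcc_of_le hTT]; exact hsubIcc)
    have hadd := integral_add_adjacent_intervals hi1 hi2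
    have hnn : 0 ≤ ∫ x in (-T)..(0:ℝ), (y x) ^ ((3:ℝ)/2) * Real.sqrt (1 + (deriv y x) ^ 2) := by
      apply integral_nonneg (by linarith)
      intro u hu
      exact mul_nonneg (Real.rpow_nonneg (hpos u (Icc_subset_Icc le_rfl hT0.le hu)).1.le _)
        (Real.sqrt_nonneg _)
    linarith
  calc 2/5 * |(y T) ^ ((5:ℝ)/2) - (y 0) ^ ((5:ℝ)/2)|
      = |∫ x in (0:ℝ)..T, (y x) ^ ((3:ℝ)/2) * deriv y x| := by
        rw [hftc, show 2/5 * (y T) ^ ((5:ℝ)/2) - 2/5 * (y 0) ^ ((5:ℝ)/2)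
          = 2/5 * ((y T) ^ ((5:ℝ)/2) - (y 0) ^ ((5:ℝ)/2)) by ring, abs_mul,
          abs_of_nonneg (by norm_num : (0:ℝ) ≤ 2/5)]
    _ ≤ _ := habs.trans hsplit


private lemma two_rpow_32_le : (2:ℝ) ^ ((3:ℝ)/2) ≤ 4 := by
  have h := Real.rpow_le_rpow_of_exponent_le (by norm_num : (1:ℝ) ≤ 2)
    (by norm_num : (3:ℝ)/2 ≤ 2)
  calc (2:ℝ) ^ ((3:ℝ)/2) ≤ (2:ℝ) ^ ((2:ℝ)) := h
    _ = 4 := by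
      rw [show ((2:ℝ):ℝ) = ((2:ℕ):ℝ) by norm_num, Real.rpow_natCast]; norm_num

private lemma rpow_fifth_le {u : ℝ} (hu : 0 ≤ u) (h : u ≤ 32) : u ^ ((1:ℝ)/5) ≤ 2 := by
  calc u ^ ((1:ℝ)/5) ≤ (32:ℝ) ^ ((1:ℝ)/5) := Real.rpow_le_rpow hu h (by norm_num)
    _ = 2 := by
      rw [show (32:ℝ) = 2 ^ (5:ℕ) by norm_num, ← Real.rpow_natCast 2 5,
        ← Real.rpow_mul (by norm_num : (0:ℝ) ≤ 2)]
      norm_num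

private lemma case1_alg {t a d P : ℝ} (ht : 0 < t) (ha : 0 < a) (hd0 : 0 ≤ d) (hda : d ≤ a)
    (h2 : t * ((a/2) ^ ((3:ℝ)/2)) ≤ P) (h3 : d ^ ((5:ℝ)/2) ≤ 5/2 * P) :
    t * (a * d) ≤ 8 * P ^ ((6:ℝ)/5) := by
  have hP0 : 0 < P :=
    lt_of_lt_of_le (mul_pos ht (Real.rpow_pos_of_pos (by linarith) _)) h2
  -- step 1 : a * d ≤ (a/2)^{3/2} * (2^{3/2} * d^{1/2})
  have hh1 : (a/2) ^ ((3:ℝ)/2) * 2 ^ ((3:ℝ)/2) = a ^ ((3:ℝ)/2) := by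
    rw [← Real.mul_rpow (by linarith : (0:ℝ) ≤ a/2) (by norm_num : (0:ℝ) ≤ 2)]
    norm_num
  have hh2 : a ^ ((3:ℝ)/2) = a * a ^ ((1:ℝ)/2) := by
    rw [show (3:ℝ)/2 = 1 + 1/2 by norm_num, Real.rpow_add ha, Real.rpow_one]
  have hh3 : d ^ ((1:ℝ)/2) * d ^ ((1:ℝ)/2) = d := by
    rw [← Real.rpow_add' hd0 (by norm_num : (1:ℝ)/2 + 1/2 ≠ 0)]
    norm_num
  have hh4 : d ^ ((1:ℝ)/2) ≤ a ^ ((1:ℝ)/2) := Real.rpow_le_rpow hd0 hda (by norm_num)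
  have key1 : a * d ≤ (a/2) ^ ((3:ℝ)/2) * (2 ^ ((3:ℝ)/2) * d ^ ((1:ℝ)/2)) := by
    have h5 : a * d ≤ a ^ ((3:ℝ)/2) * d ^ ((1:ℝ)/2) := by
      rw [hh2]
      calc a * d = a * (d ^ ((1:ℝ)/2) * d ^ ((1:ℝ)/2)) := by rw [hh3]
        _ ≤ a * (a ^ ((1:ℝ)/2) * d ^ ((1:ℝ)/2)) := by
            apply mul_le_mul_of_nonneg_left
              (mul_le_mul_of_nonneg_right hh4 (Real.rpow_nonneg hd0 _)) ha.le
        _ = a * a ^ ((1:ℝ)/2) * d ^ ((1:ℝ)/2) := by ring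
    calc a * d ≤ a ^ ((3:ℝ)/2) * d ^ ((1:ℝ)/2) := h5
      _ = (a/2) ^ ((3:ℝ)/2) * (2 ^ ((3:ℝ)/2) * d ^ ((1:ℝ)/2)) := by rw [← hh1]; ring
  -- step 2 : bound d^{1/2}
  have hd12 : d ^ ((1:ℝ)/2) ≤ (5/2 * P) ^ ((1:ℝ)/5) := by
    have := Real.rpow_le_rpow (Real.rpow_nonneg hd0 _) h3 (by norm_num : (0:ℝ) ≤ 1/5)
    rwa [← Real.rpow_mul hd0, show (5:ℝ)/2 * (1/5) = 1/2 by norm_num] at this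
  have hd12' : d ^ ((1:ℝ)/2) ≤ 2 * P ^ ((1:ℝ)/5) := by
    calc d ^ ((1:ℝ)/2) ≤ (5/2 * P) ^ ((1:ℝ)/5) := hd12
      _ = (5/2 : ℝ) ^ ((1:ℝ)/5) * P ^ ((1:ℝ)/5) :=
          Real.mul_rpow (by norm_num) hP0.le
      _ ≤ 2 * P ^ ((1:ℝ)/5) := by
          apply mul_le_mul_of_nonneg_right (rpow_fifth_le (by norm_num) (by norm_num))
            (Real.rpow_nonneg hP0.le _)
  -- assemble
  have hPP : P * P ^ ((1:ℝ)/5) = P ^ ((6:ℝ)/5) := by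
    rw [show (6:ℝ)/5 = 1 + 1/5 by norm_num, Real.rpow_add hP0, Real.rpow_one]
  calc t * (a * d) ≤ t * ((a/2) ^ ((3:ℝ)/2) * (2 ^ ((3:ℝ)/2) * d ^ ((1:ℝ)/2))) :=
        mul_le_mul_of_nonneg_left key1 ht.le
    _ = (t * (a/2) ^ ((3:ℝ)/2)) * (2 ^ ((3:ℝ)/2) * d ^ ((1:ℝ)/2)) := by ring
    _ ≤ P * (2 ^ ((3:ℝ)/2) * d ^ ((1:ℝ)/2)) := by
        apply mul_le_mul_of_nonneg_right h2
          (mul_nonneg (Real.rpow_nonneg (by norm_num) _) (Real.rpow_nonneg hd0 _))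
    _ ≤ P * (4 * (2 * P ^ ((1:ℝ)/5))) := by
        apply mul_le_mul_of_nonneg_left _ hP0.le
        apply mul_le_mul two_rpow_32_le hd12' (Real.rpow_nonneg hd0 _) (by norm_num)
    _ = 8 * (P * P ^ ((1:ℝ)/5)) := by ring
    _ = 8 * P ^ ((6:ℝ)/5) := by rw [hPP]

private lemma case2_alg {a V P : ℝ} (ha : 0 < a) (h1 : a ^ ((5:ℝ)/2) ≤ 4 * P)
    (h2 : V ≤ a ^ ((1:ℝ)/2) * P) : 1/2 * V ≤ 8 * P ^ ((6:ℝ)/5) := by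
  have hP0 : 0 < P := by
    have := Real.rpow_pos_of_pos ha ((5:ℝ)/2); linarith
  have ha12 : a ^ ((1:ℝ)/2) ≤ 2 * P ^ ((1:ℝ)/5) := by
    have h := Real.rpow_le_rpow (Real.rpow_nonneg ha.le _) h1 (by norm_num : (0:ℝ) ≤ 1/5)
    rw [← Real.rpow_mul ha.le, show (5:ℝ)/2 * (1/5) = 1/2 by norm_num] at h
    calc a ^ ((1:ℝ)/2) ≤ (4 * P) ^ ((1:ℝ)/5) := h
      _ = (4:ℝ) ^ ((1:ℝ)/5) * P ^ ((1:ℝ)/5) := Real.mul_rpow (by norm_num) hP0.le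
      _ ≤ 2 * P ^ ((1:ℝ)/5) := by
          apply mul_le_mul_of_nonneg_right (rpow_fifth_le (by norm_num) (by norm_num))
            (Real.rpow_nonneg hP0.le _)
  have hPP : P * P ^ ((1:ℝ)/5) = P ^ ((6:ℝ)/5) := by
    rw [show (6:ℝ)/5 = 1 + 1/5 by norm_num, Real.rpow_add hP0, Real.rpow_one]
  have : V ≤ 2 * P ^ ((1:ℝ)/5) * P := by
    calc V ≤ a ^ ((1:ℝ)/2) * P := h2
      _ ≤ 2 * P ^ ((1:ℝ)/5) * P := mul_le_mul_of_nonneg_right ha12 hP0.le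
  have hnn : 0 ≤ P ^ ((6:ℝ)/5) := Real.rpow_nonneg hP0.le _
  nlinarith [this, hPP]

set_option maxHeartbeats 1000000 in
/-- Graph version of the weighted isoperimetric inequality `V₁(F) ≲ F₁(F)^{6/5}` for sets
between two graphs in the strip, with weight `y` for volume and `y^{3/2}` for perimeter. -/
theorem weighted_isoperimetric_graphs :
    ∃ c : ℝ, 0 < c ∧
      ∀ T : ℝ, T ∈ Ioc (0 : ℝ) (1 / 2) →
      ∀ y₁ y₂ : ℝ → ℝ,
        ContDiffOn ℝ 1 y₁ (Icc (-T) T) → ContDiffOn ℝ 1 y₂ (Icc (-T) T) →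
        (∀ x ∈ Icc (-T) T, y₁ x ∈ Ioo (0 : ℝ) (1 / 2) ∧ y₂ x ∈ Ioo (0 : ℝ) (1 / 2) ∧
          y₁ x ≤ y₂ x) →
        y₁ (-T) = y₂ (-T) → y₁ T = y₂ T →
        (∀ x ∈ Icc (-T) T, y₁ (-x) = y₁ x ∧ y₂ (-x) = y₂ x) →
        MonotoneOn y₁ (Icc 0 T) → AntitoneOn y₂ (Icc 0 T) →
        1 / 2 * (∫ x in (-T)..T, ((y₂ x) ^ 2 - (y₁ x) ^ 2)) ≤
          c * ((∫ x in (-T)..T, (y₁ x) ^ ((3 : ℝ) / 2) * Real.sqrt (1 + (deriv y₁ x) ^ 2)) +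
               (∫ x in (-T)..T, (y₂ x) ^ ((3 : ℝ) / 2) * Real.sqrt (1 + (deriv y₂ x) ^ 2)))
            ^ ((6 : ℝ) / 5) := by
  refine ⟨8, by norm_num, ?_⟩
  intro T hT y₁ y₂ hc₁ hc₂ hmem hmT hpT heven hmono hanti
  obtain ⟨hT0, hT12⟩ := hT
  have hTT : -T ≤ T := by linarith
  have hpos₁ : ∀ x ∈ Icc (-T) T, 0 < y₁ x ∧ y₁ x < 1/2 :=
    fun x hx => ⟨(hmem x hx).1.1, (hmem x hx).1.2⟩
  have hpos₂ : ∀ x ∈ Icc (-T) T, 0 < y₂ x ∧ y₂ x < 1/2 :=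
    fun x hx => ⟨(hmem x hx).2.1.1, (hmem x hx).2.1.2⟩
  obtain ⟨hgInt₁, hK₁⟩ := key_facts hT0 hc₁ hpos₁
  obtain ⟨hgInt₂, hK₂⟩ := key_facts hT0 hc₂ hpos₂
  set A := ∫ x in (-T)..T, (y₁ x) ^ ((3:ℝ)/2) * Real.sqrt (1 + (deriv y₁ x) ^ 2) with hA
  set B := ∫ x in (-T)..T, (y₂ x) ^ ((3:ℝ)/2) * Real.sqrt (1 + (deriv y₂ x) ^ 2) with hB
  have hmem0 : (0:ℝ) ∈ Icc (-T) T := ⟨by linarith, hT0.le⟩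
  have hmemT : T ∈ Icc (-T) T := ⟨hTT, le_rfl⟩
  set a := y₂ 0 with ha_def
  set b := y₁ 0 with hb_def
  have ha0 : 0 < a := (hpos₂ 0 hmem0).1
  have hb0 : 0 < b := (hpos₁ 0 hmem0).1
  have hba : b ≤ a := (hmem 0 hmem0).2.2
  -- pointwise bounds from monotonicity and evenness
  have hub₂ : ∀ x ∈ Icc (-T) T, y₂ x ≤ a := by
    intro x hx
    rcases le_total 0 x with h | h
    · exact hanti ⟨le_rfl, hT0.le⟩ ⟨h, hx.2⟩ h
    · rw [← (heven x hx).2]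
      exact hanti ⟨le_rfl, hT0.le⟩ ⟨by linarith, by linarith [hx.1]⟩ (by linarith)
  have hlb₁ : ∀ x ∈ Icc (-T) T, b ≤ y₁ x := by
    intro x hx
    rcases le_total 0 x with h | h
    · exact hmono ⟨le_rfl, hT0.le⟩ ⟨h, hx.2⟩ h
    · rw [← (heven x hx).1]
      exact hmono ⟨le_rfl, hT0.le⟩ ⟨by linarith, by linarith [hx.1]⟩ (by linarith)
  have hlb₂ : ∀ x ∈ Icc (-T) T, y₂ T ≤ y₂ x := by
    intro x hx
    rcases le_total 0 x with h | h
    · exact hanti ⟨h, hx.2⟩ ⟨hT0.le, le_rfl⟩ hx.2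
    · rw [← (heven x hx).2]
      exact hanti ⟨by linarith, by linarith [hx.1]⟩ ⟨hT0.le, le_rfl⟩ (by linarith [hx.1])
  -- basic facts about the integrals
  have hA0 : 0 ≤ A :=
    integral_nonneg hTT fun u hu =>
      mul_nonneg (Real.rpow_nonneg (hpos₁ u hu).1.le _) (Real.sqrt_nonneg _)
  have hB0 : 0 ≤ B :=
    integral_nonneg hTT fun u hu =>
      mul_nonneg (Real.rpow_nonneg (hpos₂ u hu).1.le _) (Real.sqrt_nonneg _)
  have hVint : IntervalIntegrable (fun x => (y₂ x) ^ 2 - (y₁ x) ^ 2) volume (-T) T := by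
    apply ContinuousOn.intervalIntegrable
    rw [uIcc_of_le hTT]
    exact (hc₂.continuousOn.pow 2).sub (hc₁.continuousOn.pow 2)
  -- FTC consequences
  have hK₂' : a ^ ((5:ℝ)/2) - (y₂ T) ^ ((5:ℝ)/2) ≤ 5/2 * B := by
    have h := neg_le_abs ((y₂ T) ^ ((5:ℝ)/2) - a ^ ((5:ℝ)/2))
    linarith [hK₂]
  have hK₁' : (y₂ T) ^ ((5:ℝ)/2) - b ^ ((5:ℝ)/2) ≤ 5/2 * A := by
    have hK₁'' := hK₁
    rw [hpT] at hK₁''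
    have h := le_abs_self ((y₂ T) ^ ((5:ℝ)/2) - b ^ ((5:ℝ)/2))
    linarith [hK₁'']
  have hsqrt1 : ∀ d : ℝ, 1 ≤ Real.sqrt (1 + d ^ 2) := by
    intro d
    calc (1:ℝ) = Real.sqrt 1 := Real.sqrt_one.symm
      _ ≤ Real.sqrt (1 + d ^ 2) := Real.sqrt_le_sqrt (by nlinarith [sq_nonneg d])
  clear_value A B a b
  rcases le_or_gt (a / 2) (y₂ T) with hcase | hcase
  · -- Case I : y₂ stays above a/2
    have hVle : (∫ x in (-T)..T, ((y₂ x) ^ 2 - (y₁ x) ^ 2)) ≤ (2*T) * (2 * a * (a - b)) := by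
      have h := integral_mono_on hTT hVint intervalIntegrable_const
        (g := fun _ => 2 * a * (a - b)) (fun x hx => by
          show (y₂ x) ^ 2 - (y₁ x) ^ 2 ≤ 2 * a * (a - b)
          have h1 := hub₂ x hx
          have h2 := hlb₁ x hx
          have h3 := (hmem x hx).2.2
          have h4 := (hpos₁ x hx).1
          nlinarith [sq_nonneg (a - b),
            mul_nonneg (sub_nonneg.2 h1) (by linarith : (0:ℝ) ≤ a + y₂ x),
            mul_nonneg (sub_nonneg.2 h2) (by linarith : (0:ℝ) ≤ y₁ x + b)])
      rw [intervalIntegral.integral_const, smul_eq_mul] at h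
      calc (∫ x in (-T)..T, ((y₂ x) ^ 2 - (y₁ x) ^ 2))
          ≤ (T - -T) * (2 * a * (a - b)) := h
        _ = (2*T) * (2 * a * (a - b)) := by ring
    have hBlb : (2*T) * ((a/2) ^ ((3:ℝ)/2)) ≤ B := by
      have h := integral_mono_on hTT intervalIntegrable_const hgInt₂
        (f := fun _ => (a/2) ^ ((3:ℝ)/2)) (fun x hx => by
          show (a/2) ^ ((3:ℝ)/2) ≤ (y₂ x) ^ ((3:ℝ)/2) * Real.sqrt (1 + (deriv y₂ x) ^ 2)
          have h1 : (a/2) ^ ((3:ℝ)/2) ≤ (y₂ x) ^ ((3:ℝ)/2) :=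
            Real.rpow_le_rpow (by linarith) (le_trans hcase (hlb₂ x hx)) (by norm_num)
          calc (a/2) ^ ((3:ℝ)/2) ≤ (y₂ x) ^ ((3:ℝ)/2) := h1
            _ = (y₂ x) ^ ((3:ℝ)/2) * 1 := (mul_one _).symm
            _ ≤ (y₂ x) ^ ((3:ℝ)/2) * Real.sqrt (1 + (deriv y₂ x) ^ 2) :=
                mul_le_mul_of_nonneg_left (hsqrt1 _)
                  (Real.rpow_nonneg (hpos₂ x hx).1.le _))
      rw [intervalIntegral.integral_const, smul_eq_mul, ← hB] at h
      calc (2*T) * ((a/2) ^ ((3:ℝ)/2)) = (T - -T) * ((a/2) ^ ((3:ℝ)/2)) := by ring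
        _ ≤ B := h
    have hd5 : (a - b) ^ ((5:ℝ)/2) ≤ 5/2 * (A + B) := by
      have h1 : (a - b) ^ ((5:ℝ)/2) + b ^ ((5:ℝ)/2) ≤ a ^ ((5:ℝ)/2) := by
        have := rpow_add_le (sub_nonneg.2 hba) hb0.le (by norm_num : (1:ℝ) ≤ 5/2)
        rwa [sub_add_cancel] at this
      linarith [hK₂', hK₁']
    have hmain : (2*T) * (a * (a - b)) ≤ 8 * (A+B) ^ ((6:ℝ)/5) :=
      case1_alg (by linarith) ha0 (sub_nonneg.2 hba) (by linarith)
        (by linarith [hBlb, hA0]) (by linarith [hd5])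
    calc 1 / 2 * (∫ x in (-T)..T, ((y₂ x) ^ 2 - (y₁ x) ^ 2))
        ≤ 1/2 * ((2*T) * (2 * a * (a - b))) := by linarith [hVle]
      _ = (2*T) * (a * (a - b)) := by ring
      _ ≤ 8 * (A+B) ^ ((6:ℝ)/5) := hmain
  · -- Case II : y₂ T < a/2
    have hyT0 : 0 < y₂ T := (hpos₂ T hmemT).1
    have ha5 : a ^ ((5:ℝ)/2) ≤ 4 * (A + B) := by
      have h1 : (y₂ T) ^ ((5:ℝ)/2) ≤ (a/2) ^ ((5:ℝ)/2) :=
        Real.rpow_le_rpow hyT0.le hcase.le (by norm_num)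
      have h2 : (a/2) ^ ((5:ℝ)/2) ≤ 3/8 * a ^ ((5:ℝ)/2) := by
        have e : (a/2) ^ ((5:ℝ)/2) = a ^ ((5:ℝ)/2) * (1/2 : ℝ) ^ ((5:ℝ)/2) := by
          rw [show a/2 = a * (1/2) by ring, Real.mul_rpow ha0.le (by norm_num)]
        have e2 : ((1:ℝ)/2) ^ ((5:ℝ)/2) ≤ 3/8 := by
          have h3 : ((1:ℝ)/2) ^ ((5:ℝ)/2) ≤ ((1:ℝ)/2) ^ ((2:ℝ)) :=
            Real.rpow_le_rpow_of_exponent_ge (by norm_num) (by norm_num) (by norm_num)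
          have h4 : ((1:ℝ)/2) ^ ((2:ℝ)) = 1/4 := by
            rw [show ((2:ℝ):ℝ) = ((2:ℕ):ℝ) by norm_num, Real.rpow_natCast]; norm_num
          linarith
        rw [e]
        nlinarith [Real.rpow_nonneg ha0.le ((5:ℝ)/2)]
      linarith [hK₂', hA0]
    have hVle : (∫ x in (-T)..T, ((y₂ x) ^ 2 - (y₁ x) ^ 2)) ≤ a ^ ((1:ℝ)/2) * B := by
      have h := integral_mono_on hTT hVint (hgInt₂.const_mul (a ^ ((1:ℝ)/2)))
        (g := fun x => a ^ ((1:ℝ)/2) *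
          ((y₂ x) ^ ((3:ℝ)/2) * Real.sqrt (1 + (deriv y₂ x) ^ 2)))
        (fun x hx => by
          show (y₂ x) ^ 2 - (y₁ x) ^ 2 ≤ a ^ ((1:ℝ)/2) *
            ((y₂ x) ^ ((3:ℝ)/2) * Real.sqrt (1 + (deriv y₂ x) ^ 2))
          have hyx := (hpos₂ x hx).1
          have h1 : (y₂ x) ^ 2 - (y₁ x) ^ 2 ≤ (y₂ x) ^ 2 := by nlinarith [sq_nonneg (y₁ x)]
          have h2 : (y₂ x) ^ 2 = (y₂ x) ^ ((1:ℝ)/2) * (y₂ x) ^ ((3:ℝ)/2) := by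
            rw [← Real.rpow_add hyx, show (1:ℝ)/2 + 3/2 = 2 by norm_num,
              show ((2:ℝ):ℝ) = ((2:ℕ):ℝ) by norm_num, Real.rpow_natCast]
          have h3 : (y₂ x) ^ ((1:ℝ)/2) ≤ a ^ ((1:ℝ)/2) :=
            Real.rpow_le_rpow hyx.le (hub₂ x hx) (by norm_num)
          calc (y₂ x) ^ 2 - (y₁ x) ^ 2 ≤ (y₂ x) ^ 2 := h1
            _ = (y₂ x) ^ ((1:ℝ)/2) * (y₂ x) ^ ((3:ℝ)/2) := h2
            _ ≤ a ^ ((1:ℝ)/2) * (y₂ x) ^ ((3:ℝ)/2) :=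
                mul_le_mul_of_nonneg_right h3 (Real.rpow_nonneg hyx.le _)
            _ = a ^ ((1:ℝ)/2) * ((y₂ x) ^ ((3:ℝ)/2) * 1) := by ring
            _ ≤ a ^ ((1:ℝ)/2) *
                ((y₂ x) ^ ((3:ℝ)/2) * Real.sqrt (1 + (deriv y₂ x) ^ 2)) := by
                apply mul_le_mul_of_nonneg_left _ (Real.rpow_nonneg ha0.le _)
                exact mul_le_mul_of_nonneg_left (hsqrt1 _) (Real.rpow_nonneg hyx.le _))
      rwa [intervalIntegral.integral_const_mul, ← hB] at h
    have hVle' : (∫ x in (-T)..T, ((y₂ x) ^ 2 - (y₁ x) ^ 2)) ≤ a ^ ((1:ℝ)/2) * (A + B) := by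
      have : a ^ ((1:ℝ)/2) * B ≤ a ^ ((1:ℝ)/2) * (A + B) :=
        mul_le_mul_of_nonneg_left (by linarith) (Real.rpow_nonneg ha0.le _)
      linarith
    exact case2_alg ha0 ha5 hVle'
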